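/- Let d ≥ 1, D, G > 0, and let U ⊆ ℝ^d be a nonempty closed convex set containing 0 with ‖u − v‖ ≤ D for all u, v ∈ U. Let η_1,…,η_m ∈ (0, 1/(5DG)] with prior weights π^1,…,π^m > 0 summing to 1. Define jointly, for t = 1,…,T: the master prediction w_t = (Σ_j π^j·e^{−L_{t−1}^j}·η_j·w_t^j)/(Σ_j π^j·e^{−L_{t−1}^j}·η_j), a gradient g_t ∈ ℝ^d with ‖g_t‖ ≤ G, M_t = g_t·g_tᵀ, the surrogate losses ℓ_t^η(u) = −η⟨w_t − u, g_t⟩ + η²(⟨u − w_t, g_t⟩)², the cumulative slave losses L_t^j = Σ_{s=1}^t ℓ_s^{η_j}(w_s^j) (L_0^j = 0), and for each j the slave iterates w_1^j = 0, Σ_{t+1}^j = (D^{−2}I + 2η_j²Σ_{s=1}^t M_s)^{−1}, w̃_{t+1}^j = w_t^j − Σ_{t+1}^j·(η_j·g_t + 2η_j²·M_t·(w_t^j − w_t)), and w_{t+1}^j ∈ U the unique minimizer over u ∈ U of (u − w̃_{t+1}^j)ᵀ(Σ_{t+1}^j)^{−1}(u − w̃_{t+1}^j). Then for every j ∈ {1,…,m}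 and every u ∈ U: Σ_{t=1}^T ⟨w_t − u, g_t⟩ ≤ η_j·V_T^u + (‖u‖²/(2D²) − ln π^j + (1/2)·ln det(I + 2η_j²D²·Σ_{t=1}^T M_t)) / η_j, where V_T^u = Σ_{t=1}^T (⟨u − w_t, g_t⟩)². -/

import Mathlib

open Matrix



/-- telescoping sum -/
lemma mg_telescope (f : ℕ → ℝ) : ∀ n : ℕ, ∑ t ∈ Finset.Icc 1 n, (f t - f (t-1)) = f n - f 0 := by
  intro n
  induction n with
  | zero => simp
  | succ k ih =>
      rw [Finset.sum_Icc_succ_top (by omega)]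
      simp [ih]

/-- the exponential inequality -/
lemma mg_exp_ineq (x : ℝ) (hx : |x| ≤ 1/5) : Real.exp (x - x^2) ≤ 1 + x := by
  set y := x - x^2 with hy
  have hx' : -(1/5) ≤ x ∧ x ≤ 1/5 := abs_le.mp hx
  have hay : |y| ≤ 6/25 := by
    rw [abs_le]; constructor <;> nlinarith [hx'.1, hx'.2, sq_nonneg x]
  have h1 : |Real.exp y - ∑ m ∈ Finset.range 3, y ^ m / m.factorial| ≤
      |y| ^ 3 * ((3:ℕ).succ / ((3:ℕ).factorial * 3)) :=
    Real.exp_bound (by linarith [hay]) (by norm_num)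
  have h2 : (∑ m ∈ Finset.range 3, y ^ m / m.factorial) = 1 + y + y^2/2 := by
    norm_num [Finset.sum_range_succ, Nat.factorial]
  rw [h2] at h1
  have h1' : |Real.exp y - (1 + y + y^2/2)| ≤ |y|^3 * (2/9) := by
    convert h1 using 2
    norm_num [Nat.factorial]
  have h3 : Real.exp y ≤ 1 + y + y^2/2 + |y|^3 * (2/9) := by
    have := (abs_le.mp h1').2
    linarith
  have h4 : |y|^3 ≤ (6/25) * y^2 := by
    have : |y|^3 = |y| * |y|^2 := by ring
    rw [this, sq_abs]
    nlinarith [abs_nonneg y, sq_nonneg y]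
  have h5 : y^2 ≤ (36/25) * x^2 := by
    have he : y^2 = x^2 * (1-x)^2 := by rw [hy]; ring
    have h6 : (1-x)^2 ≤ 36/25 := by nlinarith [hx'.1, hx'.2]
    nlinarith [mul_le_mul_of_nonneg_left h6 (sq_nonneg x)]
  nlinarith [h3, h4, h5, sq_nonneg x]

/-- Cauchy–Schwarz for dot products with norm bounds -/
lemma mg_cs {d : ℕ} (x y : Fin d → ℝ) (a b : ℝ) (ha : 0 ≤ a) (hb : 0 ≤ b)
    (hx : Real.sqrt (∑ i, (x i)^2) ≤ a) (hy : Real.sqrt (∑ i, (y i)^2) ≤ b) :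
    |x ⬝ᵥ y| ≤ a * b := by
  have hx0 : 0 ≤ ∑ i, (x i)^2 := Finset.sum_nonneg fun i _ => sq_nonneg (x i)
  have hy0 : 0 ≤ ∑ i, (y i)^2 := Finset.sum_nonneg fun i _ => sq_nonneg (y i)
  have hxs : (∑ i, (x i)^2) ≤ a^2 := by
    have := Real.sq_sqrt hx0
    nlinarith [Real.sqrt_nonneg (∑ i, (x i)^2)]
  have hys : (∑ i, (y i)^2) ≤ b^2 := by
    have := Real.sq_sqrt hy0
    nlinarith [Real.sqrt_nonneg (∑ i, (y i)^2)]
  have hcs : (x ⬝ᵥ y)^2 ≤ (∑ i, (x i)^2) * (∑ i, (y i)^2) :=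
    Finset.sum_mul_sq_le_sq_mul_sq _ _ _
  have h1 : (x ⬝ᵥ y)^2 ≤ (a*b)^2 := by
    calc (x ⬝ᵥ y)^2 ≤ (∑ i, (x i)^2) * (∑ i, (y i)^2) := hcs
    _ ≤ a^2 * b^2 := by
        apply mul_le_mul hxs hys hy0 (sq_nonneg a)
    _ = (a*b)^2 := by ring
  nlinarith [sq_abs (x ⬝ᵥ y), abs_nonneg (x ⬝ᵥ y), mul_nonneg ha hb]

variable {d : ℕ}

lemma mg_dot_symm (A : Matrix (Fin d) (Fin d) ℝ) (hA : Aᵀ = A) (x y : Fin d → ℝ) :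
    x ⬝ᵥ A *ᵥ y = y ⬝ᵥ A *ᵥ x := by
  rw [Matrix.dotProduct_mulVec, ← Matrix.mulVec_transpose, hA, dotProduct_comm]

lemma mg_quad_expand (A : Matrix (Fin d) (Fin d) ℝ) (hA : Aᵀ = A) (x y : Fin d → ℝ) :
    (x + y) ⬝ᵥ A *ᵥ (x + y) =
      x ⬝ᵥ A *ᵥ x + 2 * (x ⬝ᵥ A *ᵥ y) + y ⬝ᵥ A *ᵥ y := by
  rw [Matrix.mulVec_add, dotProduct_add, add_dotProduct, add_dotProduct,
    mg_dot_symm A hA y x]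
  ring

/-- Pythagorean inequality for projections w.r.t. a PSD quadratic form onto a convex set. -/
lemma mg_pythagoras (A : Matrix (Fin d) (Fin d) ℝ) (hA : Aᵀ = A)
    (hpsd : ∀ x, 0 ≤ x ⬝ᵥ A *ᵥ x) (U : Set (Fin d → ℝ)) (hU : Convex ℝ U)
    (z p : Fin d → ℝ) (hp : p ∈ U)
    (hmin : ∀ u ∈ U, (p - z) ⬝ᵥ A *ᵥ (p - z) ≤ (u - z) ⬝ᵥ A *ᵥ (u - z))
    (u : Fin d → ℝ) (hu : u ∈ U) :
    (p - u) ⬝ᵥ A *ᵥ (p - u) ≤ (u - z) ⬝ᵥ A *ᵥ (u - z) := by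
  -- variational inequality: B := (p - z) ⬝ᵥ A (u - p) ≥ 0
  set B := (p - z) ⬝ᵥ A *ᵥ (u - p) with hB
  set Qup := (u - p) ⬝ᵥ A *ᵥ (u - p) with hQup
  have key : ∀ s : ℝ, 0 < s → s ≤ 1 → 0 ≤ 2 * B + s * Qup := by
    intro s hs hs1
    have hmem : p + s • (u - p) ∈ U := by
      have := hU hp hu (by linarith : (0:ℝ) ≤ 1 - s) (le_of_lt hs) (by ring)
      convert this using 1
      ext i
      simp [smul_eq_mul]
      ring
    have h1 := hmin _ hmem
    have hexp : (p + s • (u - p) - z) ⬝ᵥ A *ᵥ (p + s • (u - p) - z) =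
        (p - z) ⬝ᵥ A *ᵥ (p - z) + 2 * (s * B) + s^2 * Qup := by
      have e1 : p + s • (u - p) - z = (p - z) + s • (u - p) := by ext i; simp; ring
      rw [e1, mg_quad_expand A hA]
      simp only [Matrix.mulVec_smul, smul_dotProduct, dotProduct_smul, smul_eq_mul]
      ring
    rw [hexp] at h1
    nlinarith [h1, sq_nonneg s]
  have hQup0 : 0 ≤ Qup := hpsd _
  have hBpos : 0 ≤ B := by
    by_contra hneg
    push_neg at hneg
    rcases eq_or_lt_of_le hQup0 with hq | hq
    · have := key 1 one_pos le_rfl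
      rw [← hq] at this
      linarith
    · have hsle : 0 < min 1 (-B / Qup) := by
        apply lt_min one_pos
        exact div_pos (by linarith) hq
      have := key _ hsle (min_le_left _ _)
      have h2 : min 1 (-B / Qup) * Qup ≤ (-B / Qup) * Qup :=
        mul_le_mul_of_nonneg_right (min_le_right _ _) hQup0
      rw [div_mul_cancel₀ _ (ne_of_gt hq)] at h2
      linarith
  -- now expand
  have e2 : u - z = (u - p) + (p - z) := by ext i; simp
  rw [e2, mg_quad_expand A hA]
  have : (u - p) ⬝ᵥ A *ᵥ (p - z) = B := by rw [hB, mg_dot_symm A hA]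
  rw [this]
  have : p - u = -(u - p) := by ext i; simp
  rw [this, Matrix.mulVec_neg, neg_dotProduct, dotProduct_neg, neg_neg]
  linarith [hpsd (p - z)]

variable {d : ℕ}

lemma mg_rank_one_mulVec (v x : Fin d → ℝ) :
    (Matrix.of fun i k => v i * v k) *ᵥ x = (v ⬝ᵥ x) • v := by
  ext i
  simp [Matrix.mulVec, dotProduct, smul_eq_mul, Finset.mul_sum, Finset.sum_mul]
  congr 1
  ext k
  ring

lemma mg_rank_one_eq_col_row (v : Fin d → ℝ) :
    (Matrix.of fun i k => v i * v k) = Matrix.replicateCol Unit v * Matrix.replicateRow Unit v := by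
  ext i k
  simp [Matrix.mul_apply]

/-- rank one update: determinant identity and inverse quadratic form bound. -/
lemma mg_rank_one (B A : Matrix (Fin d) (Fin d) ℝ) (hB : B.PosDef) (v : Fin d → ℝ)
    (hA : A = B + Matrix.of fun i k => v i * v k) :
    B.det ≤ A.det ∧ 0 < A.det ∧ 0 ≤ v ⬝ᵥ A⁻¹ *ᵥ v ∧
      v ⬝ᵥ A⁻¹ *ᵥ v ≤ Real.log A.det - Real.log B.det := by
  classical
  have hBdet : 0 < B.det := hB.det_pos
  have hBunit : IsUnit B.det := hBdet.ne'.isUnit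
  have hBinv : B⁻¹.PosSemidef := hB.inv.posSemidef
  set β := v ⬝ᵥ B⁻¹ *ᵥ v with hβdef
  have hβ : 0 ≤ β := by
    have := hBinv.dotProduct_mulVec_nonneg v
    simpa using this
  -- determinant identity
  have hdet : A.det = B.det * (1 + β) := by
    have h1 : A = B * (1 + B⁻¹ * (Matrix.replicateCol Unit v * Matrix.replicateRow Unit v)) := by
      rw [Matrix.mul_add, Matrix.mul_one, ← Matrix.mul_assoc,
        Matrix.mul_nonsing_inv _ hBunit, Matrix.one_mul, hA, mg_rank_one_eq_col_row]
    rw [h1, Matrix.det_mul, ← Matrix.mul_assoc, ← Matrix.replicateCol_mulVec,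
      Matrix.det_one_add_replicateCol_mul_replicateRow]
  have hdetpos : 0 < A.det := by rw [hdet]; positivity
  have hAunit : IsUnit A.det := hdetpos.ne'.isUnit
  -- inverse quadratic form
  set x := A⁻¹ *ᵥ v with hx
  have hAx : A *ᵥ x = v := by
    rw [hx, Matrix.mulVec_mulVec, Matrix.mul_nonsing_inv _ hAunit, Matrix.one_mulVec]
  set α := v ⬝ᵥ x with hα
  have hBx : B *ᵥ x = v - α • v := by
    have : A *ᵥ x = B *ᵥ x + (α • v) := by
      rw [hA, Matrix.add_mulVec, mg_rank_one_mulVec]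
    rw [this] at hAx
    ext i
    have h := congrFun hAx i
    simp only [Pi.add_apply, Pi.sub_apply, Pi.smul_apply, smul_eq_mul] at h ⊢
    linarith
  have hxeq : x = (1 - α) • (B⁻¹ *ᵥ v) := by
    have h2 : B⁻¹ *ᵥ (B *ᵥ x) = x := by
      rw [Matrix.mulVec_mulVec, Matrix.nonsing_inv_mul _ hBunit, Matrix.one_mulVec]
    rw [← h2, hBx]
    have : v - α • v = (1 - α) • v := by ext i; simp [smul_eq_mul]; ring
    rw [this, Matrix.mulVec_smul]
  have hαβ : α = (1 - α) * β := by
    conv_lhs => rw [hα, hxeq]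
    rw [dotProduct_smul, smul_eq_mul]
  have h1β : (0:ℝ) < 1 + β := by linarith
  have hαval : α = 1 - 1 / (1 + β) := by
    field_simp
    nlinarith [hαβ]
  have hα0 : 0 ≤ α := by
    rw [hαval]
    have : 1 / (1 + β) ≤ 1 := by
      rw [div_le_one h1β]; linarith
    linarith
  have hlog : α ≤ Real.log A.det - Real.log B.det := by
    have hlr : Real.log A.det - Real.log B.det = Real.log (1 + β) := by
      rw [hdet, Real.log_mul hBdet.ne' h1β.ne']
      ring
    rw [hlr, hαval]
    have := Real.log_le_sub_one_of_pos (show (0:ℝ) < (1+β)⁻¹ by positivity)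
    rw [Real.log_inv] at this
    have h2 : (1+β)⁻¹ = 1/(1+β) := by rw [one_div]
    linarith
  refine ⟨?_, hdetpos, hα0, hlog⟩
  rw [hdet]
  nlinarith [hBdet]

lemma mg_sum_mulVec {d : ℕ} (s : Finset ℕ) (F : ℕ → Matrix (Fin d) (Fin d) ℝ) (x : Fin d → ℝ) :
    (∑ i ∈ s, F i) *ᵥ x = ∑ i ∈ s, F i *ᵥ x := by
  ext k
  simp only [Matrix.mulVec, dotProduct, Finset.sum_apply, Finset.sum_mul, Matrix.sum_apply]
  rw [Finset.sum_comm]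

lemma mg_sum_dotProduct {ι : Type*} {d : ℕ} (s : Finset ι) (y : ι → Fin d → ℝ) (x : Fin d → ℝ) :
    (∑ i ∈ s, y i) ⬝ᵥ x = ∑ i ∈ s, y i ⬝ᵥ x := by
  simp only [dotProduct, Finset.sum_apply, Finset.sum_mul]
  rw [Finset.sum_comm]

lemma mg_dotProduct_sum {d : ℕ} (s : Finset ℕ) (y : ℕ → Fin d → ℝ) (x : Fin d → ℝ) :
    x ⬝ᵥ (∑ i ∈ s, y i) = ∑ i ∈ s, x ⬝ᵥ y i := by
  simp only [dotProduct, Finset.sum_apply, Finset.mul_sum]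
  rw [Finset.sum_comm]


set_option maxHeartbeats 1000000 in
/-- Theorem 6 of the paper (Grid point regret, full version of MetaGrad): for every grid
point `η_j` with prior weight `π^j` and every `u ∈ U`,
`Σ_t ⟨w_t − u, g_t⟩ ≤ η_j·V_T^u + (‖u‖²/(2D²) − ln π^j + ½ ln det(I + 2η_j²D²Σ_t M_t))/η_j`.
Here `ℝ^d` is modelled as `Fin d → ℝ` with the explicit Euclidean norm. -/
theorem stmt_9 {d m T : ℕ} (hd : 1 ≤ d)
    (D G : ℝ) (hD : 0 < D) (hG : 0 < G)
    (U : Set (Fin d → ℝ)) (hUne : U.Nonempty) (hUclosed : IsClosed U) (hUconv : Convex ℝ U)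
    (hU0 : (0 : Fin d → ℝ) ∈ U)
    (hdiam : ∀ u ∈ U, ∀ v ∈ U, Real.sqrt (∑ i, (u i - v i) ^ 2) ≤ D)
    -- learning rates and prior weights
    (η : Fin m → ℝ) (hη : ∀ j, η j ∈ Set.Ioc (0 : ℝ) (1 / (5 * D * G)))
    (π : Fin m → ℝ) (hπ : ∀ j, 0 < π j) (hπsum : ∑ j, π j = 1)
    -- gradients for rounds 1,…,T and the matrices M_t = g_t g_tᵀ
    (g : ℕ → Fin d → ℝ) (hg : ∀ t, 1 ≤ t → t ≤ T → Real.sqrt (∑ i, (g t i) ^ 2) ≤ G)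
    (M : ℕ → Matrix (Fin d) (Fin d) ℝ)
    (hM : ∀ t, M t = Matrix.of fun i j => g t i * g t j)
    -- master predictions, surrogate losses and cumulative slave losses
    (w : ℕ → Fin d → ℝ) (ws : ℕ → Fin m → Fin d → ℝ)
    (ℓ : ℕ → ℝ → (Fin d → ℝ) → ℝ)
    (hℓ : ∀ t e u, ℓ t e u = -e * ((w t - u) ⬝ᵥ g t) + e ^ 2 * ((u - w t) ⬝ᵥ g t) ^ 2)
    (L : ℕ → Fin m → ℝ)
    (hL : ∀ t j, L t j = ∑ s ∈ Finset.Icc 1 t, ℓ s (η j) (ws s j))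
    -- the master: tilted exponentially weighted average of the slaves
    (hw : ∀ t, 1 ≤ t → t ≤ T →
      w t = (∑ j, π j * Real.exp (-(L (t - 1) j)) * η j)⁻¹ •
        ∑ j, (π j * Real.exp (-(L (t - 1) j)) * η j) • ws t j)
    -- the slaves: covariance matrices, unprojected updates, and projections onto U
    (S : ℕ → Fin m → Matrix (Fin d) (Fin d) ℝ)
    (hS : ∀ t, 1 ≤ t → ∀ j, S (t + 1) j =
      ((D ^ 2)⁻¹ • (1 : Matrix (Fin d) (Fin d) ℝ) +
        (2 * (η j) ^ 2) • ∑ s ∈ Finset.Icc 1 t, M s)⁻¹)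
    (wtil : ℕ → Fin m → Fin d → ℝ) (hws1 : ∀ j, ws 1 j = 0)
    (hwtil : ∀ t, 1 ≤ t → t ≤ T → ∀ j, wtil (t + 1) j =
      ws t j - (S (t + 1) j).mulVec
        ((η j) • g t + (2 * (η j) ^ 2) • (M t).mulVec (ws t j - w t)))
    (hproj : ∀ t, 1 ≤ t → t ≤ T → ∀ j, ws (t + 1) j ∈ U ∧ ∀ u ∈ U,
      (ws (t + 1) j - wtil (t + 1) j) ⬝ᵥ
          (S (t + 1) j)⁻¹.mulVec (ws (t + 1) j - wtil (t + 1) j) ≤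
        (u - wtil (t + 1) j) ⬝ᵥ (S (t + 1) j)⁻¹.mulVec (u - wtil (t + 1) j)) :
    -- conclusion: grid point regret bound
    ∀ j, ∀ u ∈ U,
      ∑ t ∈ Finset.Icc 1 T, (w t - u) ⬝ᵥ g t ≤
        η j * (∑ t ∈ Finset.Icc 1 T, ((u - w t) ⬝ᵥ g t) ^ 2) +
          ((∑ i, (u i) ^ 2) / (2 * D ^ 2) - Real.log (π j) +
            (1 / 2) * Real.log
              (Matrix.det (1 + (2 * (η j) ^ 2 * D ^ 2) • ∑ t ∈ Finset.Icc 1 T, M t))) /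
            η j := by
  intro j u hu
  have hDG : 0 < D * G := mul_pos hD hG
  have he0 : 0 < η j := (hη j).1
  have heB : η j ≤ 1 / (5 * D * G) := (hη j).2
  -- slaves stay in U
  have hwsU : ∀ t, 1 ≤ t → t ≤ T → ∀ j', ws t j' ∈ U := by
    intro t ht htT j'
    rcases eq_or_lt_of_le ht with h1 | h2
    · rw [← h1, hws1]; exact hU0
    · obtain ⟨s, rfl⟩ : ∃ s, t = s + 1 := ⟨t - 1, by omega⟩
      exact (hproj s (by omega) (by omega) j').1
  -- the master stays in U
  have hwU : ∀ t, 1 ≤ t → t ≤ T → w t ∈ U := by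
    intro t ht htT
    rw [hw t ht htT]
    have hcpos : ∀ j', 0 < π j' * Real.exp (-(L (t - 1) j')) * η j' :=
      fun j' => mul_pos (mul_pos (hπ j') (Real.exp_pos _)) (hη j').1
    have hZ : 0 < ∑ j', π j' * Real.exp (-(L (t - 1) j')) * η j' :=
      Finset.sum_pos (fun j' _ => hcpos j') ⟨j, Finset.mem_univ j⟩
    rw [Finset.smul_sum]
    have hrw : ∀ j' : Fin m,
        (∑ j'', π j'' * Real.exp (-(L (t - 1) j'')) * η j'')⁻¹ •
          (π j' * Real.exp (-(L (t - 1) j')) * η j') • ws t j' =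
        ((∑ j'', π j'' * Real.exp (-(L (t - 1) j'')) * η j'')⁻¹ *
          (π j' * Real.exp (-(L (t - 1) j')) * η j')) • ws t j' := by
      intro j'; rw [smul_smul]
    rw [Finset.sum_congr rfl fun j' _ => hrw j']
    apply hUconv.sum_mem
    · intro i _
      have := hcpos i
      positivity
    · rw [← Finset.mul_sum, inv_mul_cancel₀ hZ.ne']
    · intro i _; exact hwsU t ht htT i
  -- dot product bound
  have hdotDG : ∀ t, 1 ≤ t → t ≤ T → ∀ a ∈ U, ∀ b ∈ U, |(a - b) ⬝ᵥ g t| ≤ D * G := by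
    intro t ht htT a ha b hb
    apply mg_cs (a - b) (g t) D G hD.le hG.le ?_ (hg t ht htT)
    simpa using hdiam a ha b hb
  -- cumulative loss recursion
  have hLrec : ∀ (t : ℕ) (j' : Fin m), L (t + 1) j' = L t j' + ℓ (t + 1) (η j') (ws (t + 1) j') := by
    intro t j'
    rw [hL, hL, Finset.sum_Icc_succ_top (by omega : 1 ≤ t + 1)]
  have hL0 : ∀ j', L 0 j' = 0 := by intro j'; rw [hL]; simp
  -- master potential
  have hPhi : ∀ t, t ≤ T → (∑ j', π j' * Real.exp (-(L t j'))) ≤ 1 := by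
    intro t
    induction t with
    | zero =>
        intro _
        simp only [hL0, neg_zero, Real.exp_zero, mul_one]
        exact le_of_eq hπsum
    | succ k ih =>
        intro hT
        refine le_trans ?_ (ih (by omega))
        have hk1 : 1 ≤ k + 1 := by omega
        have hwmem := hwU (k+1) hk1 hT
        have hterm : ∀ j' : Fin m, π j' * Real.exp (-(L (k+1) j')) ≤
            π j' * Real.exp (-(L k j')) *
              (1 + η j' * ((w (k+1) - ws (k+1) j') ⬝ᵥ g (k+1))) := by
          intro j'
          have hxb : |η j' * ((w (k+1) - ws (k+1) j') ⬝ᵥ g (k+1))| ≤ 1/5 := by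
            have h1 := hdotDG (k+1) hk1 hT (w (k+1)) hwmem (ws (k+1) j') (hwsU (k+1) hk1 hT j')
            rw [abs_mul, abs_of_pos (hη j').1]
            calc η j' * |(w (k+1) - ws (k+1) j') ⬝ᵥ g (k+1)|
                ≤ (1 / (5 * D * G)) * (D * G) := by
                  apply mul_le_mul (hη j').2 h1 (abs_nonneg _) (by positivity)
              _ = 1/5 := by field_simp
          have hsl : -(ℓ (k+1) (η j') (ws (k+1) j')) =
              η j' * ((w (k+1) - ws (k+1) j') ⬝ᵥ g (k+1)) -
                (η j' * ((w (k+1) - ws (k+1) j') ⬝ᵥ g (k+1)))^2 := by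
            rw [hℓ]
            have h2 : (ws (k+1) j' - w (k+1)) ⬝ᵥ g (k+1) =
                -((w (k+1) - ws (k+1) j') ⬝ᵥ g (k+1)) := by
              rw [← neg_dotProduct, neg_sub]
            rw [h2]; ring
          have hmono := mg_exp_ineq _ hxb
          rw [← hsl] at hmono
          calc π j' * Real.exp (-(L (k+1) j'))
              = π j' * Real.exp (-(L k j')) * Real.exp (-(ℓ (k+1) (η j') (ws (k+1) j'))) := by
                rw [hLrec k j', neg_add, Real.exp_add]; ring
            _ ≤ π j' * Real.exp (-(L k j')) *
                (1 + η j' * ((w (k+1) - ws (k+1) j') ⬝ᵥ g (k+1))) := by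
                apply mul_le_mul_of_nonneg_left hmono
                  (mul_pos (hπ j') (Real.exp_pos _)).le
        have hzero : (∑ j', (π j' * Real.exp (-(L k j')) * η j') *
            ((w (k+1) - ws (k+1) j') ⬝ᵥ g (k+1))) = 0 := by
          have hcpos : ∀ j', 0 < π j' * Real.exp (-(L k j')) * η j' :=
            fun j' => mul_pos (mul_pos (hπ j') (Real.exp_pos _)) (hη j').1
          have hZ : 0 < ∑ j', π j' * Real.exp (-(L k j')) * η j' :=
            Finset.sum_pos (fun j' _ => hcpos j') ⟨j, Finset.mem_univ j⟩
          have hwc := hw (k+1) hk1 hT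
          rw [Nat.add_sub_cancel] at hwc
          have hsum : (∑ j', (π j' * Real.exp (-(L k j')) * η j') • ws (k+1) j') =
              (∑ j', π j' * Real.exp (-(L k j')) * η j') • w (k+1) := by
            rw [hwc, smul_smul, mul_inv_cancel₀ hZ.ne', one_smul]
          have e1 : (∑ j', (π j' * Real.exp (-(L k j')) * η j') *
              ((w (k+1) - ws (k+1) j') ⬝ᵥ g (k+1))) =
              (∑ j', π j' * Real.exp (-(L k j')) * η j') * (w (k+1) ⬝ᵥ g (k+1)) -
              (∑ j', (π j' * Real.exp (-(L k j')) * η j') * (ws (k+1) j' ⬝ᵥ g (k+1))) := by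
            rw [Finset.sum_mul, ← Finset.sum_sub_distrib]
            apply Finset.sum_congr rfl
            intro j' _
            rw [sub_dotProduct]; ring
          have e2 : (∑ j', (π j' * Real.exp (-(L k j')) * η j') * (ws (k+1) j' ⬝ᵥ g (k+1))) =
              (∑ j', π j' * Real.exp (-(L k j')) * η j') * (w (k+1) ⬝ᵥ g (k+1)) := by
            calc (∑ j', (π j' * Real.exp (-(L k j')) * η j') * (ws (k+1) j' ⬝ᵥ g (k+1)))
                = ((∑ j', (π j' * Real.exp (-(L k j')) * η j') • ws (k+1) j') ⬝ᵥ g (k+1)) := by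
                  rw [mg_sum_dotProduct]
                  apply Finset.sum_congr rfl
                  intro j' _
                  rw [smul_dotProduct, smul_eq_mul]
              _ = (∑ j', π j' * Real.exp (-(L k j')) * η j') * (w (k+1) ⬝ᵥ g (k+1)) := by
                  rw [hsum, smul_dotProduct, smul_eq_mul]
          rw [e1, e2, sub_self]
        calc (∑ j', π j' * Real.exp (-(L (k+1) j')))
            ≤ ∑ j', π j' * Real.exp (-(L k j')) *
              (1 + η j' * ((w (k+1) - ws (k+1) j') ⬝ᵥ g (k+1))) :=
              Finset.sum_le_sum fun j' _ => hterm j'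
          _ = (∑ j', π j' * Real.exp (-(L k j'))) +
              (∑ j', (π j' * Real.exp (-(L k j')) * η j') *
                ((w (k+1) - ws (k+1) j') ⬝ᵥ g (k+1))) := by
              rw [← Finset.sum_add_distrib]
              apply Finset.sum_congr rfl
              intro j' _; ring
          _ = ∑ j', π j' * Real.exp (-(L k j')) := by rw [hzero, add_zero]
  -- master conclusion
  have hmaster : Real.log (π j) ≤ L T j := by
    have h1 : π j * Real.exp (-(L T j)) ≤ 1 := by
      refine le_trans ?_ (hPhi T le_rfl)
      exact Finset.single_le_sum (f := fun j' => π j' * Real.exp (-(L T j')))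
        (fun i _ => (mul_pos (hπ i) (Real.exp_pos _)).le) (Finset.mem_univ j)
    have h2 : Real.exp (Real.log (π j) + -(L T j)) ≤ Real.exp 0 := by
      rw [Real.exp_add, Real.exp_log (hπ j), Real.exp_zero]
      exact h1
    have := Real.exp_le_exp.mp h2
    linarith
  -- ===================== slave analysis =====================
  obtain ⟨A, hAdef⟩ : ∃ A : ℕ → Matrix (Fin d) (Fin d) ℝ, ∀ t,
      A t = (D ^ 2)⁻¹ • (1 : Matrix (Fin d) (Fin d) ℝ) +
        (2 * (η j) ^ 2) • ∑ s ∈ Finset.Icc 1 t, M s := ⟨_, fun _ => rfl⟩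
  obtain ⟨b, hbdef⟩ : ∃ b : ℕ → Fin d → ℝ, ∀ t,
      b t = (η j) • g t + (2 * (η j) ^ 2) • (M t) *ᵥ (ws t j - w t) := ⟨_, fun _ => rfl⟩
  have hD2 : (0:ℝ) < D ^ 2 := by positivity
  -- rank-one action of M
  have hMv : ∀ (s : ℕ) (x : Fin d → ℝ), (M s) *ᵥ x = (g s ⬝ᵥ x) • g s := by
    intro s x
    rw [hM]
    exact mg_rank_one_mulVec (g s) x
  -- quadratic form of A t
  have hQform : ∀ (t : ℕ) (x : Fin d → ℝ), x ⬝ᵥ (A t) *ᵥ x =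
      (D ^ 2)⁻¹ * (∑ i, (x i) ^ 2) +
        2 * (η j) ^ 2 * ∑ s ∈ Finset.Icc 1 t, (x ⬝ᵥ g s) ^ 2 := by
    intro t x
    rw [hAdef t, Matrix.add_mulVec, dotProduct_add]
    congr 1
    · rw [Matrix.smul_mulVec, Matrix.one_mulVec, dotProduct_smul, smul_eq_mul]
      congr 1
      simp [dotProduct, pow_two]
    · rw [Matrix.smul_mulVec, dotProduct_smul, smul_eq_mul]
      congr 1
      rw [mg_sum_mulVec, mg_dotProduct_sum]
      apply Finset.sum_congr rfl
      intro s _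
      rw [hMv, dotProduct_smul, smul_eq_mul, dotProduct_comm (g s) x]
      ring
  have hQ0 : ∀ (t : ℕ) (x : Fin d → ℝ), 0 ≤ x ⬝ᵥ (A t) *ᵥ x := by
    intro t x
    rw [hQform]
    have h1 : 0 ≤ ∑ i, (x i) ^ 2 := Finset.sum_nonneg fun i _ => sq_nonneg _
    have h2 : 0 ≤ ∑ s ∈ Finset.Icc 1 t, (x ⬝ᵥ g s) ^ 2 :=
      Finset.sum_nonneg fun s _ => sq_nonneg _
    positivity
  have hAsym : ∀ t, (A t)ᵀ = A t := by
    intro t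
    rw [hAdef t, Matrix.transpose_add, Matrix.transpose_smul, Matrix.transpose_one,
      Matrix.transpose_smul, Matrix.transpose_sum]
    congr 1
    congr 1
    apply Finset.sum_congr rfl
    intro s _
    ext i k
    simp [hM, mul_comm]
  have hApd : ∀ t, (A t).PosDef := by
    intro t
    refine Matrix.PosDef.of_dotProduct_mulVec_pos ?_ ?_
    · show (A t)ᴴ = A t
      ext i k
      rw [Matrix.conjTranspose_apply]
      have h1 : (A t) k i = (A t) i k := congrFun (congrFun (hAsym t) i) k
      simpa using h1
    · intro x hx
      have hst : star x = x := by
        funext i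
        simp
      rw [hst]
      show 0 < x ⬝ᵥ (A t) *ᵥ x
      rw [hQform]
      obtain ⟨i, hi⟩ := Function.ne_iff.mp hx
      have h1 : 0 < ∑ i, (x i) ^ 2 :=
        Finset.sum_pos' (fun i _ => sq_nonneg _)
          ⟨i, Finset.mem_univ i, by nlinarith [sq_abs (x i), abs_pos.mpr hi]⟩
      have h2 : 0 ≤ ∑ s ∈ Finset.Icc 1 t, (x ⬝ᵥ g s) ^ 2 :=
        Finset.sum_nonneg fun s _ => sq_nonneg _
      have h3 : 0 < (D ^ 2)⁻¹ * (∑ i, (x i) ^ 2) := by positivity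
      nlinarith [sq_nonneg (η j)]
  have hAunit : ∀ t, IsUnit (A t).det := fun t => (hApd t).det_pos.ne'.isUnit
  have hAinv_nn : ∀ (t : ℕ) (y : Fin d → ℝ), 0 ≤ y ⬝ᵥ (A t)⁻¹ *ᵥ y := by
    intro t y
    have h1 := (hApd t).inv.posSemidef.dotProduct_mulVec_nonneg y
    have hst : star y = y := by funext i; simp
    rw [hst] at h1
    simpa using h1
  have hSA : ∀ t, 1 ≤ t → S (t+1) j = (A t)⁻¹ := by
    intro t ht
    rw [hS t ht j, ← hAdef t]
  have hwtilA : ∀ t, 1 ≤ t → t ≤ T → wtil (t+1) j = ws t j - (A t)⁻¹ *ᵥ b t := by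
    intro t ht htT
    rw [hwtil t ht htT j, hSA t ht, hbdef t]
  -- the per-round inequality
  have hstep : ∀ t, 1 ≤ t → t ≤ T →
      ℓ t (η j) (ws t j) - ℓ t (η j) u ≤
        (ws t j - u) ⬝ᵥ (A (t-1)) *ᵥ (ws t j - u) / 2
        - (ws (t+1) j - u) ⬝ᵥ (A t) *ᵥ (ws (t+1) j - u) / 2
        + (b t ⬝ᵥ (A t)⁻¹ *ᵥ b t) / 2 := by
    intro t ht htT
    have hsur : ℓ t (η j) (ws t j) - ℓ t (η j) u =
        b t ⬝ᵥ (ws t j - u) - (η j) ^ 2 * ((ws t j - u) ⬝ᵥ g t) ^ 2 := by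
      rw [hℓ, hℓ, hbdef, hMv]
      rw [dotProduct_comm _ (ws t j - u), dotProduct_add,
        dotProduct_smul, dotProduct_smul, dotProduct_smul, smul_eq_mul, smul_eq_mul,
        smul_eq_mul]
      rw [dotProduct_comm (ws t j - u) (g t)]
      simp only [sub_dotProduct, dotProduct_sub, smul_eq_mul]
      rw [dotProduct_comm (g t) (ws t j), dotProduct_comm (g t) u,
        dotProduct_comm (g t) (w t)]
      ring
    have hSinv : (S (t+1) j)⁻¹ = A t := by
      rw [hSA t ht, Matrix.nonsing_inv_nonsing_inv _ (hAunit t)]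
    have hp := hproj t ht htT j
    have hmin : ∀ u' ∈ U,
        (ws (t+1) j - wtil (t+1) j) ⬝ᵥ (A t) *ᵥ (ws (t+1) j - wtil (t+1) j) ≤
        (u' - wtil (t+1) j) ⬝ᵥ (A t) *ᵥ (u' - wtil (t+1) j) := by
      intro u' hu'
      have h2 := hp.2 u' hu'
      rwa [hSinv] at h2
    have hup : (ws (t+1) j - u) ⬝ᵥ (A t) *ᵥ (ws (t+1) j - u) ≤
        (u - wtil (t+1) j) ⬝ᵥ (A t) *ᵥ (u - wtil (t+1) j) :=
      mg_pythagoras (A t) (hAsym t) (hQ0 t) U hUconv (wtil (t+1) j) (ws (t+1) j)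
        hp.1 hmin u hu
    have hexp : (u - wtil (t+1) j) ⬝ᵥ (A t) *ᵥ (u - wtil (t+1) j) =
        (ws t j - u) ⬝ᵥ (A t) *ᵥ (ws t j - u) - 2 * (b t ⬝ᵥ (ws t j - u)) +
          b t ⬝ᵥ (A t)⁻¹ *ᵥ b t := by
      rw [hwtilA t ht htT]
      have e1 : u - (ws t j - (A t)⁻¹ *ᵥ b t) = (u - ws t j) + (A t)⁻¹ *ᵥ b t := by
        ext i; simp; ring
      rw [e1, mg_quad_expand (A t) (hAsym t)]
      have e2 : (u - ws t j) ⬝ᵥ (A t) *ᵥ ((A t)⁻¹ *ᵥ b t) = (u - ws t j) ⬝ᵥ b t := by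
        rw [Matrix.mulVec_mulVec, Matrix.mul_nonsing_inv _ (hAunit t), Matrix.one_mulVec]
      have e3 : ((A t)⁻¹ *ᵥ b t) ⬝ᵥ (A t) *ᵥ ((A t)⁻¹ *ᵥ b t) = b t ⬝ᵥ (A t)⁻¹ *ᵥ b t := by
        rw [Matrix.mulVec_mulVec, Matrix.mul_nonsing_inv _ (hAunit t), Matrix.one_mulVec,
          dotProduct_comm]
      have e4 : (u - ws t j) ⬝ᵥ (A t) *ᵥ (u - ws t j) =
          (ws t j - u) ⬝ᵥ (A t) *ᵥ (ws t j - u) := by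
        have h5 : u - ws t j = -(ws t j - u) := by ext i; simp
        rw [h5, Matrix.mulVec_neg, neg_dotProduct, dotProduct_neg, neg_neg]
      have e5 : (u - ws t j) ⬝ᵥ b t = -(b t ⬝ᵥ (ws t j - u)) := by
        rw [dotProduct_comm, dotProduct_sub, dotProduct_sub]
        ring
      rw [e2, e3, e4, e5]
      ring
    have hdrop : (ws t j - u) ⬝ᵥ (A t) *ᵥ (ws t j - u) =
        (ws t j - u) ⬝ᵥ (A (t-1)) *ᵥ (ws t j - u) +
          2 * (η j) ^ 2 * ((ws t j - u) ⬝ᵥ g t) ^ 2 := by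
      rw [hQform t, hQform (t-1)]
      obtain ⟨k, rfl⟩ : ∃ k, t = k + 1 := ⟨t - 1, by omega⟩
      rw [Nat.add_sub_cancel, Finset.sum_Icc_succ_top (by omega : 1 ≤ k + 1)]
      ring
    linarith
  -- summing the per-round inequalities
  have hsum : ∀ n, n ≤ T → ∑ t ∈ Finset.Icc 1 n, (ℓ t (η j) (ws t j) - ℓ t (η j) u) ≤
      (ws 1 j - u) ⬝ᵥ (A 0) *ᵥ (ws 1 j - u) / 2
      - (ws (n+1) j - u) ⬝ᵥ (A n) *ᵥ (ws (n+1) j - u) / 2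
      + ∑ t ∈ Finset.Icc 1 n, (b t ⬝ᵥ (A t)⁻¹ *ᵥ b t) / 2 := by
    intro n
    induction n with
    | zero => intro _; simp
    | succ k ih =>
        intro hk
        rw [Finset.sum_Icc_succ_top (by omega : 1 ≤ k + 1),
          Finset.sum_Icc_succ_top (by omega : 1 ≤ k + 1)]
        have hst := hstep (k+1) (by omega) hk
        rw [Nat.add_sub_cancel] at hst
        have hih := ih (by omega)
        linarith
  -- bounding the b-terms via the rank-one determinant lemma
  have hbb : ∀ t, 1 ≤ t → t ≤ T →
      (b t ⬝ᵥ (A t)⁻¹ *ᵥ b t) / 2 ≤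
        (49/100) * (Real.log (A t).det - Real.log (A (t-1)).det) ∧
      0 ≤ Real.log (A t).det - Real.log (A (t-1)).det := by
    intro t ht htT
    have hArec : A t = A (t-1) + (2 * (η j) ^ 2) • M t := by
      obtain ⟨k, rfl⟩ : ∃ k, t = k + 1 := ⟨t - 1, by omega⟩
      rw [hAdef (k+1), hAdef ((k+1)-1), Nat.add_sub_cancel,
        Finset.sum_Icc_succ_top (by omega : 1 ≤ k + 1), smul_add, add_assoc]
    have hsq2 : Real.sqrt 2 ^ 2 = 2 := Real.sq_sqrt (by norm_num)
    have hAeq : A t = A (t-1) +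
        Matrix.of (fun i k => ((Real.sqrt 2 * η j) • g t) i * ((Real.sqrt 2 * η j) • g t) k) := by
      rw [hArec]
      congr 1
      ext i k
      simp only [Matrix.smul_apply, hM, Matrix.of_apply, smul_eq_mul, Pi.smul_apply]
      linear_combination (-(η j ^ 2 * g t i * g t k)) * hsq2
    obtain ⟨hdle, hdpos, hα0, hαle⟩ :=
      mg_rank_one (A (t-1)) (A t) (hApd (t-1)) ((Real.sqrt 2 * η j) • g t) hAeq
    have hv : ((Real.sqrt 2 * η j) • g t) ⬝ᵥ (A t)⁻¹ *ᵥ ((Real.sqrt 2 * η j) • g t) =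
        2 * (η j) ^ 2 * (g t ⬝ᵥ (A t)⁻¹ *ᵥ g t) := by
      rw [smul_dotProduct, Matrix.mulVec_smul, dotProduct_smul, smul_eq_mul, smul_eq_mul]
      linear_combination (η j ^ 2 * (g t ⬝ᵥ (A t)⁻¹ *ᵥ g t)) * hsq2
    rw [hv] at hα0 hαle
    constructor
    · -- b t = (η j * c) • g t
      have hc : b t = (η j * (1 + 2 * η j * ((ws t j - w t) ⬝ᵥ g t))) • g t := by
        rw [hbdef, hMv, dotProduct_comm (g t) (ws t j - w t)]
        ext i
        simp only [Pi.add_apply, Pi.smul_apply, smul_eq_mul]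
        ring
      have hcb : (1 + 2 * η j * ((ws t j - w t) ⬝ᵥ g t)) ^ 2 ≤ 49/25 := by
        have hdot := hdotDG t ht htT (ws t j) (hwsU t ht htT j) (w t) (hwU t ht htT)
        have h2 : |2 * η j * ((ws t j - w t) ⬝ᵥ g t)| ≤ 2/5 := by
          rw [abs_mul, abs_of_pos (show (0:ℝ) < 2 * η j by positivity)]
          calc 2 * η j * |(ws t j - w t) ⬝ᵥ g t| ≤ (2 * (1 / (5 * D * G))) * (D * G) := by
                apply mul_le_mul (by linarith) hdot (abs_nonneg _) (by positivity)
            _ = 2/5 := by field_simp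
        have h3 := abs_le.mp h2
        nlinarith [h3.1, h3.2]
      have hbq : b t ⬝ᵥ (A t)⁻¹ *ᵥ b t =
          (η j * (1 + 2 * η j * ((ws t j - w t) ⬝ᵥ g t))) ^ 2 *
            (g t ⬝ᵥ (A t)⁻¹ *ᵥ g t) := by
        rw [hc, smul_dotProduct, Matrix.mulVec_smul, dotProduct_smul, smul_eq_mul,
          smul_eq_mul]
        ring
      have hgq : 0 ≤ g t ⬝ᵥ (A t)⁻¹ *ᵥ g t := hAinv_nn t (g t)
      rw [hbq]
      have h7 : (η j * (1 + 2 * η j * ((ws t j - w t) ⬝ᵥ g t))) ^ 2 ≤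
          (49/25) * η j ^ 2 := by
        have h8 := mul_le_mul_of_nonneg_left hcb (sq_nonneg (η j))
        calc (η j * (1 + 2 * η j * ((ws t j - w t) ⬝ᵥ g t))) ^ 2
            = η j ^ 2 * (1 + 2 * η j * ((ws t j - w t) ⬝ᵥ g t)) ^ 2 := by ring
          _ ≤ η j ^ 2 * (49/25) := h8
          _ = (49/25) * η j ^ 2 := by ring
      have h6 := mul_le_mul_of_nonneg_right h7 hgq
      have h9 := mul_le_mul_of_nonneg_left hαle (show (0:ℝ) ≤ 49/100 by norm_num)
      linarith [h6, h9]
    · have hld := Real.log_le_log (hApd (t-1)).det_pos hdle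
      linarith
  have htel : ∑ t ∈ Finset.Icc 1 T, (Real.log (A t).det - Real.log (A (t-1)).det) =
      Real.log (A T).det - Real.log (A 0).det :=
    mg_telescope (fun t => Real.log (A t).det) T
  have hsum_b : ∑ t ∈ Finset.Icc 1 T, (b t ⬝ᵥ (A t)⁻¹ *ᵥ b t) / 2 ≤
      (1/2) * (Real.log (A T).det - Real.log (A 0).det) := by
    have h1 : ∑ t ∈ Finset.Icc 1 T, (b t ⬝ᵥ (A t)⁻¹ *ᵥ b t) / 2 ≤
        ∑ t ∈ Finset.Icc 1 T, (49/100) * (Real.log (A t).det - Real.log (A (t-1)).det) := by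
      apply Finset.sum_le_sum
      intro t htm
      have hm := Finset.mem_Icc.mp htm
      exact (hbb t hm.1 hm.2).1
    have h2 : 0 ≤ Real.log (A T).det - Real.log (A 0).det := by
      rw [← htel]
      apply Finset.sum_nonneg
      intro t htm
      have hm := Finset.mem_Icc.mp htm
      exact (hbb t hm.1 hm.2).2
    rw [← Finset.mul_sum, htel] at h1
    linarith
  -- identify the log-determinant
  have hdetAT : Real.log (A T).det - Real.log (A 0).det =
      Real.log (Matrix.det (1 + (2 * (η j) ^ 2 * D ^ 2) • ∑ t ∈ Finset.Icc 1 T, M t)) := by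
    have h1 : (1 : Matrix (Fin d) (Fin d) ℝ) +
        (2 * (η j) ^ 2 * D ^ 2) • ∑ t ∈ Finset.Icc 1 T, M t = (D ^ 2) • A T := by
      rw [hAdef T, smul_add, smul_smul, smul_smul, mul_inv_cancel₀ hD2.ne', one_smul,
        mul_comm (D^2) (2 * η j ^ 2)]
    have hdT : 0 < (A T).det := (hApd T).det_pos
    have hd0 : (A 0).det = ((D ^ 2)⁻¹) ^ d := by
      rw [hAdef 0]
      simp [Matrix.det_smul, Fintype.card_fin]
    rw [h1, Matrix.det_smul, Fintype.card_fin, hd0,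
      Real.log_mul (by positivity) hdT.ne', Real.log_pow, Real.log_pow, Real.log_inv]
    ring
  -- assemble the slave regret bound
  have hslave : ∑ t ∈ Finset.Icc 1 T, (ℓ t (η j) (ws t j) - ℓ t (η j) u) ≤
      (∑ i, (u i) ^ 2) / (2 * D ^ 2) +
        (1/2) * Real.log
          (Matrix.det (1 + (2 * (η j) ^ 2 * D ^ 2) • ∑ t ∈ Finset.Icc 1 T, M t)) := by
    have h1 := hsum T le_rfl
    have h2 : (ws 1 j - u) ⬝ᵥ (A 0) *ᵥ (ws 1 j - u) = (D ^ 2)⁻¹ * ∑ i, (u i) ^ 2 := by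
      rw [hQform]
      have h3 : ws 1 j - u = -u := by rw [hws1]; ext i; simp
      rw [h3]
      simp [neg_sq]
    have h3 : 0 ≤ (ws (T+1) j - u) ⬝ᵥ (A T) *ᵥ (ws (T+1) j - u) := hQ0 T _
    have h4 : (D ^ 2)⁻¹ * (∑ i, (u i) ^ 2) / 2 = (∑ i, (u i) ^ 2) / (2 * D ^ 2) := by
      rw [inv_mul_eq_div, div_div, mul_comm (D^2) 2]
    rw [h2, h4] at h1
    rw [← hdetAT]
    linarith
  -- combine master and slave bounds
  have hsplit : ∑ t ∈ Finset.Icc 1 T, (ℓ t (η j) (ws t j) - ℓ t (η j) u) =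
      L T j - ∑ t ∈ Finset.Icc 1 T, ℓ t (η j) u := by
    rw [hL T j, Finset.sum_sub_distrib]
  have hlossu : ∑ t ∈ Finset.Icc 1 T, ℓ t (η j) u =
      -(η j * ∑ t ∈ Finset.Icc 1 T, (w t - u) ⬝ᵥ g t) +
        (η j) ^ 2 * ∑ t ∈ Finset.Icc 1 T, ((u - w t) ⬝ᵥ g t) ^ 2 := by
    rw [Finset.mul_sum, Finset.mul_sum, ← Finset.sum_neg_distrib, ← Finset.sum_add_distrib]
    apply Finset.sum_congr rfl
    intro t _
    rw [hℓ]
    ring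
  set R := ∑ t ∈ Finset.Icc 1 T, (w t - u) ⬝ᵥ g t with hR
  set V := ∑ t ∈ Finset.Icc 1 T, ((u - w t) ⬝ᵥ g t) ^ 2 with hV
  set X := (∑ i, (u i) ^ 2) / (2 * D ^ 2) with hX
  set LD := Real.log
      (Matrix.det (1 + (2 * (η j) ^ 2 * D ^ 2) • ∑ t ∈ Finset.Icc 1 T, M t)) with hLD
  have hkey : η j * R ≤ η j * (η j * V) + (X - Real.log (π j) + (1/2) * LD) := by
    rw [hsplit, hlossu] at hslave
    nlinarith [hslave, hmaster]
  have h9 : η j * R ≤ η j * (η j * V + (X - Real.log (π j) + (1/2) * LD) / η j) := by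
    rw [mul_add, mul_div_cancel₀ _ he0.ne']
    linarith
  exact le_of_mul_le_mul_left h9 he0
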